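/- arXiv:2303.15002 — 3 statements merged into one kernel-verified Lean document; each statement's English description precedes it below -/
import Mathlib

section
/- The domain D224 does not have maximal width: there is no linear order w in D224 whose reverse order also belongs to D224. -/
/-- The (1-indexed) rank of the element `x` within the triple `{a, b, c}` under the
linear order `w` on `Fin n`, where `w k` is the element ranked in position `k`
(so `w.symm y` is the position of the element `y`). -/
def tripleRank {n : ℕ} (w : Equiv.Perm (Fin n)) (a b c x : Fin n) : ℕ :=
  (({a, b, c} : Finset (Fin n)).filter (fun y => w.symm y ≤ w.symm x)).card


lemma tripleRank_eq {n : ℕ} (w : Equiv.Perm (Fin n)) (a b c x : Fin n)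
    (hab : a ≠ b) (hac : a ≠ c) (hbc : b ≠ c) :
    tripleRank w a b c x = (if w.symm a ≤ w.symm x then 1 else 0)
      + (if w.symm b ≤ w.symm x then 1 else 0)
      + (if w.symm c ≤ w.symm x then 1 else 0) := by
  unfold tripleRank
  simp only [Finset.filter_insert, Finset.filter_singleton]
  split_ifs <;> simp_all [Finset.card_insert_of_notMem, hab, hac, hbc]

/-- A Condorcet domain on `X_n = {1, ..., n}` (modelled as `Fin n`): for every triple
`a < b < c` there is an element `x` of the triple and a position `i ∈ {1, 2, 3}` such
that no order of `D` places `x` in position `i` when restricted to `{a, b, c}`. -/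
def IsCondorcet (n : ℕ) (D : Set (Equiv.Perm (Fin n))) : Prop :=
  ∀ a b c : Fin n, a < b → b < c →
    ∃ x ∈ ({a, b, c} : Finset (Fin n)), ∃ i ∈ ({1, 2, 3} : Finset ℕ),
      ∀ w ∈ D, tripleRank w a b c x ≠ i

/-- The reverse of a linear order `w` on `Fin n`: it ranks the elements in exactly the
opposite way to `w`. -/
def reverseOrder {n : ℕ} (w : Equiv.Perm (Fin n)) : Equiv.Perm (Fin n) :=
  w * Fin.revPerm

/-- The domain `D224`: all linear orders on `{1, ..., 8}` (modelled as `Fin 8`, with the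
alternative `k` represented by `k - 1 : Fin 8`) satisfying the 56 listed never-laws. -/
def D224 : Set (Equiv.Perm (Fin 8)) :=
  {w | tripleRank w 0 1 2 1 ≠ 3 ∧
    tripleRank w 0 1 3 0 ≠ 3 ∧
    tripleRank w 0 1 4 4 ≠ 1 ∧
    tripleRank w 0 1 5 5 ≠ 1 ∧
    tripleRank w 0 1 6 6 ≠ 1 ∧
    tripleRank w 0 1 7 7 ≠ 1 ∧
    tripleRank w 0 2 3 0 ≠ 3 ∧
    tripleRank w 0 2 4 4 ≠ 1 ∧
    tripleRank w 0 2 5 5 ≠ 1 ∧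
    tripleRank w 0 2 6 6 ≠ 1 ∧
    tripleRank w 0 2 7 7 ≠ 1 ∧
    tripleRank w 0 3 4 0 ≠ 3 ∧
    tripleRank w 0 3 5 0 ≠ 3 ∧
    tripleRank w 0 3 6 0 ≠ 3 ∧
    tripleRank w 0 3 7 0 ≠ 3 ∧
    tripleRank w 0 4 5 0 ≠ 3 ∧
    tripleRank w 0 4 6 0 ≠ 3 ∧
    tripleRank w 0 4 7 7 ≠ 1 ∧
    tripleRank w 0 5 6 6 ≠ 1 ∧
    tripleRank w 0 5 7 0 ≠ 3 ∧
    tripleRank w 0 6 7 0 ≠ 3 ∧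
    tripleRank w 1 2 3 1 ≠ 3 ∧
    tripleRank w 1 2 4 1 ≠ 3 ∧
    tripleRank w 1 2 5 1 ≠ 3 ∧
    tripleRank w 1 2 6 1 ≠ 3 ∧
    tripleRank w 1 2 7 1 ≠ 3 ∧
    tripleRank w 1 3 4 4 ≠ 1 ∧
    tripleRank w 1 3 5 5 ≠ 1 ∧
    tripleRank w 1 3 6 6 ≠ 1 ∧
    tripleRank w 1 3 7 7 ≠ 1 ∧
    tripleRank w 1 4 5 1 ≠ 3 ∧
    tripleRank w 1 4 6 1 ≠ 3 ∧
    tripleRank w 1 4 7 7 ≠ 1 ∧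
    tripleRank w 1 5 6 6 ≠ 1 ∧
    tripleRank w 1 5 7 1 ≠ 3 ∧
    tripleRank w 1 6 7 1 ≠ 3 ∧
    tripleRank w 2 3 4 4 ≠ 1 ∧
    tripleRank w 2 3 5 5 ≠ 1 ∧
    tripleRank w 2 3 6 6 ≠ 1 ∧
    tripleRank w 2 3 7 7 ≠ 1 ∧
    tripleRank w 2 4 5 2 ≠ 3 ∧
    tripleRank w 2 4 6 2 ≠ 3 ∧
    tripleRank w 2 4 7 7 ≠ 1 ∧
    tripleRank w 2 5 6 6 ≠ 1 ∧
    tripleRank w 2 5 7 2 ≠ 3 ∧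
    tripleRank w 2 6 7 2 ≠ 3 ∧
    tripleRank w 3 4 5 3 ≠ 3 ∧
    tripleRank w 3 4 6 3 ≠ 3 ∧
    tripleRank w 3 4 7 7 ≠ 1 ∧
    tripleRank w 3 5 6 6 ≠ 1 ∧
    tripleRank w 3 5 7 3 ≠ 3 ∧
    tripleRank w 3 6 7 3 ≠ 3 ∧
    tripleRank w 4 5 6 6 ≠ 1 ∧
    tripleRank w 4 5 7 7 ≠ 1 ∧
    tripleRank w 4 6 7 7 ≠ 1 ∧
    tripleRank w 5 6 7 6 ≠ 1}

set_option maxHeartbeats 2000000 in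
/-- `D224` does not have maximal width: no order of `D224` has its reverse in `D224`. -/
theorem stmt7 : ¬ ∃ w ∈ D224, reverseOrder w ∈ D224 :=  by
  rintro ⟨w, hw, hrw⟩
  simp only [D224, Set.mem_setOf_eq] at hw hrw
  obtain ⟨_, _, _, _, _, _, _, _, _, _, _, _, _, _, _, _, _, _, _, _, _, _, _, _, _, _, _, _, _, _, _, _, _, _, _, _, _, _, _, h40, _, _, _, _, _, h46, _, _, _, _, _, h52, _, _, _, _⟩ := hw
  obtain ⟨_, _, _, _, _, _, _, _, _, _, _, _, _, _, _, _, _, _, _, _, _, _, _, _, _, _, _, _, _, _, _, _, _, _, _, _, _, _, _, r40, _, _, _, _, _, r46, _, _, _, _, _, r52, _, _, _, _⟩ := hrw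
  have hrev : ∀ y : Fin 8, (reverseOrder w).symm y = Fin.rev (w.symm y) := by
    intro y; simp [reverseOrder, Equiv.Perm.mul_def]
  have hne : ∀ a b : Fin 8, a ≠ b → ((w.symm a : Fin 8) : ℕ) ≠ ((w.symm b : Fin 8) : ℕ) :=
    fun a b h hv => h (w.symm.injective (Fin.val_injective hv))
  have d27 := hne 2 7 (by decide)
  have d37 := hne 3 7 (by decide)
  have d26 := hne 2 6 (by decide)
  have d36 := hne 3 6 (by decide)
  have d23 := hne 2 3 (by decide)
  have d67 := hne 6 7 (by decide)
  rw [tripleRank_eq w 2 3 7 7 (by decide) (by decide) (by decide)] at h40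
  rw [tripleRank_eq w 2 6 7 2 (by decide) (by decide) (by decide)] at h46
  rw [tripleRank_eq w 3 6 7 3 (by decide) (by decide) (by decide)] at h52
  rw [tripleRank_eq (reverseOrder w) 2 3 7 7 (by decide) (by decide) (by decide)] at r40
  rw [tripleRank_eq (reverseOrder w) 2 6 7 2 (by decide) (by decide) (by decide)] at r46
  rw [tripleRank_eq (reverseOrder w) 3 6 7 3 (by decide) (by decide) (by decide)] at r52
  simp only [hrev, Fin.rev_le_rev, le_refl, if_true] at h40 h46 h52 r40 r46 r52
  have H40 : w.symm 2 ≤ w.symm 7 ∨ w.symm 3 ≤ w.symm 7 := by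
    by_contra h
    push_neg at h
    rw [if_neg (not_le.mpr h.1), if_neg (not_le.mpr h.2)] at h40
    omega
  have R40 : w.symm 7 ≤ w.symm 2 ∨ w.symm 7 ≤ w.symm 3 := by
    by_contra h
    push_neg at h
    rw [if_neg (not_le.mpr h.1), if_neg (not_le.mpr h.2)] at r40
    omega
  have H46 : ¬(w.symm 6 ≤ w.symm 2 ∧ w.symm 7 ≤ w.symm 2) := by
    rintro ⟨h1, h2⟩
    rw [if_pos h1, if_pos h2] at h46
    omega
  have R46 : ¬(w.symm 2 ≤ w.symm 6 ∧ w.symm 2 ≤ w.symm 7) := by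
    rintro ⟨h1, h2⟩
    rw [if_pos h1, if_pos h2] at r46
    omega
  have H52 : ¬(w.symm 6 ≤ w.symm 3 ∧ w.symm 7 ≤ w.symm 3) := by
    rintro ⟨h1, h2⟩
    rw [if_pos h1, if_pos h2] at h52
    omega
  have R52 : ¬(w.symm 3 ≤ w.symm 6 ∧ w.symm 3 ≤ w.symm 7) := by
    rintro ⟨h1, h2⟩
    rw [if_pos h1, if_pos h2] at r52
    omega
  simp only [Fin.le_def, not_and] at H40 R40 H46 R46 H52 R52
  omega
end

section
/- The domain D224 is self-dual: there exists a permutation g of {1,...,8} such that the set of reverses of the orders in D224 equals the image of D224 under relabeling by g (replacing each element a by g(a) in every order). -/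
/-- The image of a set of linear orders under relabelling of the alternatives by the
permutation `g`: each element `a` is replaced by `g a` in every order. -/
def relabel {n : ℕ} (g : Equiv.Perm (Fin n)) (D : Set (Equiv.Perm (Fin n))) :
    Set (Equiv.Perm (Fin n)) :=
  (fun w => g * w) '' D

lemma tripleRank_congr {n : ℕ} (v : Equiv.Perm (Fin n)) (a b c a' b' c' x : Fin n)
    (h : ({a, b, c} : Finset (Fin n)) = {a', b', c'}) :
    tripleRank v a b c x = tripleRank v a' b' c' x := by
  rw [tripleRank, tripleRank, h]

lemma tripleRank_card {n : ℕ} (w : Equiv.Perm (Fin n)) (a b c x : Fin n)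
    (hab : a ≠ b) (hac : a ≠ c) (hbc : b ≠ c) :
    tripleRank w a b c x =
      (if w.symm a ≤ w.symm x then 1 else 0) +
      ((if w.symm b ≤ w.symm x then 1 else 0) + (if w.symm c ≤ w.symm x then 1 else 0)) := by
  rw [tripleRank, Finset.card_filter]
  rw [show ({a,b,c} : Finset (Fin n)) = insert a (insert b {c}) from rfl]
  rw [Finset.sum_insert (by simp [hab, hac]), Finset.sum_insert (by simp [hbc]),
    Finset.sum_singleton]

lemma symm_mul_rev {n : ℕ} (g v : Equiv.Perm (Fin n)) (y : Fin n) :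
    (g * v * Fin.revPerm).symm y = Fin.rev (v.symm (g⁻¹ y)) := rfl

lemma pair_sum {n : ℕ} (s : Equiv.Perm (Fin n)) (u w : Fin n) (h : u ≠ w) :
    (if s.symm u ≤ s.symm w then (1:ℕ) else 0) + (if s.symm w ≤ s.symm u then 1 else 0) = 1 := by
  have hne : s.symm u ≠ s.symm w := fun hh => h (s.symm.injective hh)
  rcases lt_or_gt_of_ne hne with h' | h'
  · simp [h'.le, h'.not_ge]
  · simp [h'.le, h'.not_ge]

lemma rank_rev {n : ℕ} (v g : Equiv.Perm (Fin n)) (a b c x A B C X : Fin n)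
    (hab : a ≠ b) (hac : a ≠ c) (hbc : b ≠ c)
    (hx : x = a ∨ x = b ∨ x = c)
    (hS : ({A, B, C} : Finset (Fin n)) = {g⁻¹ a, g⁻¹ b, g⁻¹ c})
    (hX : X = g⁻¹ x) (i j : ℕ) (hij : i + j = 4) :
    (tripleRank (g * v * Fin.revPerm) a b c x ≠ i ↔ tripleRank v A B C X ≠ j) := by
  have hab' : g⁻¹ a ≠ g⁻¹ b := fun h => hab ((Equiv.injective g⁻¹) h)
  have hac' : g⁻¹ a ≠ g⁻¹ c := fun h => hac ((Equiv.injective g⁻¹) h)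
  have hbc' : g⁻¹ b ≠ g⁻¹ c := fun h => hbc ((Equiv.injective g⁻¹) h)
  rw [tripleRank_congr v A B C (g⁻¹ a) (g⁻¹ b) (g⁻¹ c) X hS, hX]
  rw [tripleRank_card _ a b c x hab hac hbc,
    tripleRank_card _ (g⁻¹ a) (g⁻¹ b) (g⁻¹ c) (g⁻¹ x) hab' hac' hbc']
  simp only [symm_mul_rev, Fin.rev_le_rev]
  rcases hx with rfl | rfl | rfl <;>
  · rcases lt_or_gt_of_ne (fun h => hab' (v.symm.injective h)) with h1 | h1 <;>
    rcases lt_or_gt_of_ne (fun h => hac' (v.symm.injective h)) with h2 | h2 <;>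
    rcases lt_or_gt_of_ne (fun h => hbc' (v.symm.injective h)) with h3 | h3 <;>
    simp [-Equiv.Perm.coe_inv, h1.le, h1.not_ge, h2.le, h2.not_ge, h3.le, h3.not_ge] <;>
    omega

def g0 : Equiv.Perm (Fin 8) :=
  ⟨![6, 7, 4, 5, 2, 3, 0, 1], ![6, 7, 4, 5, 2, 3, 0, 1], by decide, by decide⟩

lemma rev_sq : (Fin.revPerm : Equiv.Perm (Fin 8)) * Fin.revPerm = 1 := by
  ext z
  simp [Equiv.Perm.mul_apply]

lemma key (v : Equiv.Perm (Fin 8)) : v ∈ D224 ↔ g0⁻¹ * v * Fin.revPerm ∈ D224 := by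
  simp only [D224, Set.mem_setOf_eq]
  rw [    rank_rev v g0⁻¹ 0 1 2 1 4 6 7 7 (by decide) (by decide) (by decide) (by decide) (by decide) (by decide) 3 1 (by norm_num),
    rank_rev v g0⁻¹ 0 1 3 0 5 6 7 6 (by decide) (by decide) (by decide) (by decide) (by decide) (by decide) 3 1 (by norm_num),
    rank_rev v g0⁻¹ 0 1 4 4 2 6 7 2 (by decide) (by decide) (by decide) (by decide) (by decide) (by decide) 1 3 (by norm_num),
    rank_rev v g0⁻¹ 0 1 5 5 3 6 7 3 (by decide) (by decide) (by decide) (by decide) (by decide) (by decide) 1 3 (by norm_num),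
    rank_rev v g0⁻¹ 0 1 6 6 0 6 7 0 (by decide) (by decide) (by decide) (by decide) (by decide) (by decide) 1 3 (by norm_num),
    rank_rev v g0⁻¹ 0 1 7 7 1 6 7 1 (by decide) (by decide) (by decide) (by decide) (by decide) (by decide) 1 3 (by norm_num),
    rank_rev v g0⁻¹ 0 2 3 0 4 5 6 6 (by decide) (by decide) (by decide) (by decide) (by decide) (by decide) 3 1 (by norm_num),
    rank_rev v g0⁻¹ 0 2 4 4 2 4 6 2 (by decide) (by decide) (by decide) (by decide) (by decide) (by decide) 1 3 (by norm_num),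
    rank_rev v g0⁻¹ 0 2 5 5 3 4 6 3 (by decide) (by decide) (by decide) (by decide) (by decide) (by decide) 1 3 (by norm_num),
    rank_rev v g0⁻¹ 0 2 6 6 0 4 6 0 (by decide) (by decide) (by decide) (by decide) (by decide) (by decide) 1 3 (by norm_num),
    rank_rev v g0⁻¹ 0 2 7 7 1 4 6 1 (by decide) (by decide) (by decide) (by decide) (by decide) (by decide) 1 3 (by norm_num),
    rank_rev v g0⁻¹ 0 3 4 0 2 5 6 6 (by decide) (by decide) (by decide) (by decide) (by decide) (by decide) 3 1 (by norm_num),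
    rank_rev v g0⁻¹ 0 3 5 0 3 5 6 6 (by decide) (by decide) (by decide) (by decide) (by decide) (by decide) 3 1 (by norm_num),
    rank_rev v g0⁻¹ 0 3 6 0 0 5 6 6 (by decide) (by decide) (by decide) (by decide) (by decide) (by decide) 3 1 (by norm_num),
    rank_rev v g0⁻¹ 0 3 7 0 1 5 6 6 (by decide) (by decide) (by decide) (by decide) (by decide) (by decide) 3 1 (by norm_num),
    rank_rev v g0⁻¹ 0 4 5 0 2 3 6 6 (by decide) (by decide) (by decide) (by decide) (by decide) (by decide) 3 1 (by norm_num),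
    rank_rev v g0⁻¹ 0 4 6 0 0 2 6 6 (by decide) (by decide) (by decide) (by decide) (by decide) (by decide) 3 1 (by norm_num),
    rank_rev v g0⁻¹ 0 4 7 7 1 2 6 1 (by decide) (by decide) (by decide) (by decide) (by decide) (by decide) 1 3 (by norm_num),
    rank_rev v g0⁻¹ 0 5 6 6 0 3 6 0 (by decide) (by decide) (by decide) (by decide) (by decide) (by decide) 1 3 (by norm_num),
    rank_rev v g0⁻¹ 0 5 7 0 1 3 6 6 (by decide) (by decide) (by decide) (by decide) (by decide) (by decide) 3 1 (by norm_num),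
    rank_rev v g0⁻¹ 0 6 7 0 0 1 6 6 (by decide) (by decide) (by decide) (by decide) (by decide) (by decide) 3 1 (by norm_num),
    rank_rev v g0⁻¹ 1 2 3 1 4 5 7 7 (by decide) (by decide) (by decide) (by decide) (by decide) (by decide) 3 1 (by norm_num),
    rank_rev v g0⁻¹ 1 2 4 1 2 4 7 7 (by decide) (by decide) (by decide) (by decide) (by decide) (by decide) 3 1 (by norm_num),
    rank_rev v g0⁻¹ 1 2 5 1 3 4 7 7 (by decide) (by decide) (by decide) (by decide) (by decide) (by decide) 3 1 (by norm_num),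
    rank_rev v g0⁻¹ 1 2 6 1 0 4 7 7 (by decide) (by decide) (by decide) (by decide) (by decide) (by decide) 3 1 (by norm_num),
    rank_rev v g0⁻¹ 1 2 7 1 1 4 7 7 (by decide) (by decide) (by decide) (by decide) (by decide) (by decide) 3 1 (by norm_num),
    rank_rev v g0⁻¹ 1 3 4 4 2 5 7 2 (by decide) (by decide) (by decide) (by decide) (by decide) (by decide) 1 3 (by norm_num),
    rank_rev v g0⁻¹ 1 3 5 5 3 5 7 3 (by decide) (by decide) (by decide) (by decide) (by decide) (by decide) 1 3 (by norm_num),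
    rank_rev v g0⁻¹ 1 3 6 6 0 5 7 0 (by decide) (by decide) (by decide) (by decide) (by decide) (by decide) 1 3 (by norm_num),
    rank_rev v g0⁻¹ 1 3 7 7 1 5 7 1 (by decide) (by decide) (by decide) (by decide) (by decide) (by decide) 1 3 (by norm_num),
    rank_rev v g0⁻¹ 1 4 5 1 2 3 7 7 (by decide) (by decide) (by decide) (by decide) (by decide) (by decide) 3 1 (by norm_num),
    rank_rev v g0⁻¹ 1 4 6 1 0 2 7 7 (by decide) (by decide) (by decide) (by decide) (by decide) (by decide) 3 1 (by norm_num),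
    rank_rev v g0⁻¹ 1 4 7 7 1 2 7 1 (by decide) (by decide) (by decide) (by decide) (by decide) (by decide) 1 3 (by norm_num),
    rank_rev v g0⁻¹ 1 5 6 6 0 3 7 0 (by decide) (by decide) (by decide) (by decide) (by decide) (by decide) 1 3 (by norm_num),
    rank_rev v g0⁻¹ 1 5 7 1 1 3 7 7 (by decide) (by decide) (by decide) (by decide) (by decide) (by decide) 3 1 (by norm_num),
    rank_rev v g0⁻¹ 1 6 7 1 0 1 7 7 (by decide) (by decide) (by decide) (by decide) (by decide) (by decide) 3 1 (by norm_num),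
    rank_rev v g0⁻¹ 2 3 4 4 2 4 5 2 (by decide) (by decide) (by decide) (by decide) (by decide) (by decide) 1 3 (by norm_num),
    rank_rev v g0⁻¹ 2 3 5 5 3 4 5 3 (by decide) (by decide) (by decide) (by decide) (by decide) (by decide) 1 3 (by norm_num),
    rank_rev v g0⁻¹ 2 3 6 6 0 4 5 0 (by decide) (by decide) (by decide) (by decide) (by decide) (by decide) 1 3 (by norm_num),
    rank_rev v g0⁻¹ 2 3 7 7 1 4 5 1 (by decide) (by decide) (by decide) (by decide) (by decide) (by decide) 1 3 (by norm_num),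
    rank_rev v g0⁻¹ 2 4 5 2 2 3 4 4 (by decide) (by decide) (by decide) (by decide) (by decide) (by decide) 3 1 (by norm_num),
    rank_rev v g0⁻¹ 2 4 6 2 0 2 4 4 (by decide) (by decide) (by decide) (by decide) (by decide) (by decide) 3 1 (by norm_num),
    rank_rev v g0⁻¹ 2 4 7 7 1 2 4 1 (by decide) (by decide) (by decide) (by decide) (by decide) (by decide) 1 3 (by norm_num),
    rank_rev v g0⁻¹ 2 5 6 6 0 3 4 0 (by decide) (by decide) (by decide) (by decide) (by decide) (by decide) 1 3 (by norm_num),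
    rank_rev v g0⁻¹ 2 5 7 2 1 3 4 4 (by decide) (by decide) (by decide) (by decide) (by decide) (by decide) 3 1 (by norm_num),
    rank_rev v g0⁻¹ 2 6 7 2 0 1 4 4 (by decide) (by decide) (by decide) (by decide) (by decide) (by decide) 3 1 (by norm_num),
    rank_rev v g0⁻¹ 3 4 5 3 2 3 5 5 (by decide) (by decide) (by decide) (by decide) (by decide) (by decide) 3 1 (by norm_num),
    rank_rev v g0⁻¹ 3 4 6 3 0 2 5 5 (by decide) (by decide) (by decide) (by decide) (by decide) (by decide) 3 1 (by norm_num),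
    rank_rev v g0⁻¹ 3 4 7 7 1 2 5 1 (by decide) (by decide) (by decide) (by decide) (by decide) (by decide) 1 3 (by norm_num),
    rank_rev v g0⁻¹ 3 5 6 6 0 3 5 0 (by decide) (by decide) (by decide) (by decide) (by decide) (by decide) 1 3 (by norm_num),
    rank_rev v g0⁻¹ 3 5 7 3 1 3 5 5 (by decide) (by decide) (by decide) (by decide) (by decide) (by decide) 3 1 (by norm_num),
    rank_rev v g0⁻¹ 3 6 7 3 0 1 5 5 (by decide) (by decide) (by decide) (by decide) (by decide) (by decide) 3 1 (by norm_num),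
    rank_rev v g0⁻¹ 4 5 6 6 0 2 3 0 (by decide) (by decide) (by decide) (by decide) (by decide) (by decide) 1 3 (by norm_num),
    rank_rev v g0⁻¹ 4 5 7 7 1 2 3 1 (by decide) (by decide) (by decide) (by decide) (by decide) (by decide) 1 3 (by norm_num),
    rank_rev v g0⁻¹ 4 6 7 7 0 1 2 1 (by decide) (by decide) (by decide) (by decide) (by decide) (by decide) 1 3 (by norm_num),
    rank_rev v g0⁻¹ 5 6 7 6 0 1 3 0 (by decide) (by decide) (by decide) (by decide) (by decide) (by decide) 1 3 (by norm_num)]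
  constructor
  · rintro ⟨h1, h2, h3, h4, h5, h6, h7, h8, h9, h10, h11, h12, h13, h14, h15, h16, h17, h18, h19, h20, h21, h22, h23, h24, h25, h26, h27, h28, h29, h30, h31, h32, h33, h34, h35, h36, h37, h38, h39, h40, h41, h42, h43, h44, h45, h46, h47, h48, h49, h50, h51, h52, h53, h54, h55, h56⟩
    exact ⟨h55, h56, h46, h52, h21, h36, h53, h42, h48, h17, h32, h44, h50, h19, h34, h39, h10, h25, h14, h29, h5, h54, h43, h49, h18, h33, h45, h51, h20, h35, h40, h11, h26, h15, h30, h6, h41, h47, h16, h31, h37, h8, h23, h12, h27, h3, h38, h9, h24, h13, h28, h4, h7, h22, h1, h2⟩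
  · rintro ⟨h1, h2, h3, h4, h5, h6, h7, h8, h9, h10, h11, h12, h13, h14, h15, h16, h17, h18, h19, h20, h21, h22, h23, h24, h25, h26, h27, h28, h29, h30, h31, h32, h33, h34, h35, h36, h37, h38, h39, h40, h41, h42, h43, h44, h45, h46, h47, h48, h49, h50, h51, h52, h53, h54, h55, h56⟩
    exact ⟨h55, h56, h46, h52, h21, h36, h53, h42, h48, h17, h32, h44, h50, h19, h34, h39, h10, h25, h14, h29, h5, h54, h43, h49, h18, h33, h45, h51, h20, h35, h40, h11, h26, h15, h30, h6, h41, h47, h16, h31, h37, h8, h23, h12, h27, h3, h38, h9, h24, h13, h28, h4, h7, h22, h1, h2⟩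

/-- `D224` is self-dual: the set of reverses of its orders is a relabelling of `D224`. -/
theorem stmt8 :
    ∃ g : Equiv.Perm (Fin 8), reverseOrder '' D224 = relabel g D224 := by
  refine ⟨g0, ?_⟩
  ext w
  simp only [Set.mem_image, relabel, reverseOrder]
  constructor
  · rintro ⟨v, hv, rfl⟩
    refine ⟨g0⁻¹ * v * Fin.revPerm, (key v).1 hv, ?_⟩
    group
  · rintro ⟨u, hu, rfl⟩
    refine ⟨g0 * u * Fin.revPerm, ?_, ?_⟩
    · rw [key]
      have : g0⁻¹ * (g0 * u * Fin.revPerm) * Fin.revPerm = u := by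
        rw [show g0⁻¹ * (g0 * u * Fin.revPerm) * Fin.revPerm
            = (g0⁻¹ * g0) * u * (Fin.revPerm * Fin.revPerm) by group, rev_sq]
        group
      rwa [this]
    · rw [show g0 * u * Fin.revPerm * Fin.revPerm = g0 * u * (Fin.revPerm * Fin.revPerm) by group,
        rev_sq]
      group
end

section
/- The domain D224 is invariant under the Klein four-group G = {id, (12)(34), (56)(78), (12)(34)(56)(78)}: for every g in G, the image of D224 under relabeling by g (replacing each element a by g(a) in every order) equals D224. -/
lemma tripleRank_mul {n : ℕ} (g w : Equiv.Perm (Fin n)) (a b c x : Fin n) :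
    tripleRank (g * w) (g a) (g b) (g c) (g x) = tripleRank w a b c x := by
  unfold tripleRank
  have hs : ({g a, g b, g c} : Finset (Fin n)) = ({a, b, c} : Finset (Fin n)).image g := by
    simp [Finset.image_insert]
  have hsym : ∀ y, (g * w).symm (g y) = w.symm y := by
    intro y
    simp [Equiv.Perm.mul_def]
  rw [hs, Finset.filter_image]
  rw [Finset.card_image_of_injective _ g.injective]
  simp only [Function.comp, hsym]

lemma key_s9 {n : ℕ} (g w : Equiv.Perm (Fin n)) (a b c x A B C X : Fin n) (i : ℕ)
    (hA : ({g a, g b, g c} : Finset (Fin n)) = {A, B, C}) (hx : g x = X)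
    (h : tripleRank w a b c x ≠ i) : tripleRank (g * w) A B C X ≠ i := by
  have h2 : tripleRank (g * w) A B C X = tripleRank (g * w) (g a) (g b) (g c) (g x) := by
    unfold tripleRank; rw [hA, hx]
  rw [h2, tripleRank_mul]; exact h

def g2 : Equiv.Perm (Fin 8) := Equiv.swap 0 1 * Equiv.swap 2 3
def g3 : Equiv.Perm (Fin 8) := Equiv.swap 4 5 * Equiv.swap 6 7
def g4 : Equiv.Perm (Fin 8) := Equiv.swap 0 1 * Equiv.swap 2 3 * (Equiv.swap 4 5 * Equiv.swap 6 7)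

lemma stab_g2 : ∀ w ∈ D224, (g2 * w) ∈ D224 := by
  intro w hw
  obtain ⟨h1, h2, h3, h4, h5, h6, h7, h8, h9, h10, h11, h12, h13, h14, h15, h16, h17, h18, h19, h20, h21, h22, h23, h24, h25, h26, h27, h28, h29, h30, h31, h32, h33, h34, h35, h36, h37, h38, h39, h40, h41, h42, h43, h44, h45, h46, h47, h48, h49, h50, h51, h52, h53, h54, h55, h56⟩ := hw
  exact ⟨key_s9 _ w 0 1 3 0 0 1 2 1 3 (by decide) (by decide) h2,
      key_s9 _ w 0 1 2 1 0 1 3 0 3 (by decide) (by decide) h1,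
      key_s9 _ w 0 1 4 4 0 1 4 4 1 (by decide) (by decide) h3,
      key_s9 _ w 0 1 5 5 0 1 5 5 1 (by decide) (by decide) h4,
      key_s9 _ w 0 1 6 6 0 1 6 6 1 (by decide) (by decide) h5,
      key_s9 _ w 0 1 7 7 0 1 7 7 1 (by decide) (by decide) h6,
      key_s9 _ w 1 2 3 1 0 2 3 0 3 (by decide) (by decide) h22,
      key_s9 _ w 1 3 4 4 0 2 4 4 1 (by decide) (by decide) h27,
      key_s9 _ w 1 3 5 5 0 2 5 5 1 (by decide) (by decide) h28,
      key_s9 _ w 1 3 6 6 0 2 6 6 1 (by decide) (by decide) h29,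
      key_s9 _ w 1 3 7 7 0 2 7 7 1 (by decide) (by decide) h30,
      key_s9 _ w 1 2 4 1 0 3 4 0 3 (by decide) (by decide) h23,
      key_s9 _ w 1 2 5 1 0 3 5 0 3 (by decide) (by decide) h24,
      key_s9 _ w 1 2 6 1 0 3 6 0 3 (by decide) (by decide) h25,
      key_s9 _ w 1 2 7 1 0 3 7 0 3 (by decide) (by decide) h26,
      key_s9 _ w 1 4 5 1 0 4 5 0 3 (by decide) (by decide) h31,
      key_s9 _ w 1 4 6 1 0 4 6 0 3 (by decide) (by decide) h32,
      key_s9 _ w 1 4 7 7 0 4 7 7 1 (by decide) (by decide) h33,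
      key_s9 _ w 1 5 6 6 0 5 6 6 1 (by decide) (by decide) h34,
      key_s9 _ w 1 5 7 1 0 5 7 0 3 (by decide) (by decide) h35,
      key_s9 _ w 1 6 7 1 0 6 7 0 3 (by decide) (by decide) h36,
      key_s9 _ w 0 2 3 0 1 2 3 1 3 (by decide) (by decide) h7,
      key_s9 _ w 0 3 4 0 1 2 4 1 3 (by decide) (by decide) h12,
      key_s9 _ w 0 3 5 0 1 2 5 1 3 (by decide) (by decide) h13,
      key_s9 _ w 0 3 6 0 1 2 6 1 3 (by decide) (by decide) h14,
      key_s9 _ w 0 3 7 0 1 2 7 1 3 (by decide) (by decide) h15,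
      key_s9 _ w 0 2 4 4 1 3 4 4 1 (by decide) (by decide) h8,
      key_s9 _ w 0 2 5 5 1 3 5 5 1 (by decide) (by decide) h9,
      key_s9 _ w 0 2 6 6 1 3 6 6 1 (by decide) (by decide) h10,
      key_s9 _ w 0 2 7 7 1 3 7 7 1 (by decide) (by decide) h11,
      key_s9 _ w 0 4 5 0 1 4 5 1 3 (by decide) (by decide) h16,
      key_s9 _ w 0 4 6 0 1 4 6 1 3 (by decide) (by decide) h17,
      key_s9 _ w 0 4 7 7 1 4 7 7 1 (by decide) (by decide) h18,
      key_s9 _ w 0 5 6 6 1 5 6 6 1 (by decide) (by decide) h19,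
      key_s9 _ w 0 5 7 0 1 5 7 1 3 (by decide) (by decide) h20,
      key_s9 _ w 0 6 7 0 1 6 7 1 3 (by decide) (by decide) h21,
      key_s9 _ w 2 3 4 4 2 3 4 4 1 (by decide) (by decide) h37,
      key_s9 _ w 2 3 5 5 2 3 5 5 1 (by decide) (by decide) h38,
      key_s9 _ w 2 3 6 6 2 3 6 6 1 (by decide) (by decide) h39,
      key_s9 _ w 2 3 7 7 2 3 7 7 1 (by decide) (by decide) h40,
      key_s9 _ w 3 4 5 3 2 4 5 2 3 (by decide) (by decide) h47,
      key_s9 _ w 3 4 6 3 2 4 6 2 3 (by decide) (by decide) h48,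
      key_s9 _ w 3 4 7 7 2 4 7 7 1 (by decide) (by decide) h49,
      key_s9 _ w 3 5 6 6 2 5 6 6 1 (by decide) (by decide) h50,
      key_s9 _ w 3 5 7 3 2 5 7 2 3 (by decide) (by decide) h51,
      key_s9 _ w 3 6 7 3 2 6 7 2 3 (by decide) (by decide) h52,
      key_s9 _ w 2 4 5 2 3 4 5 3 3 (by decide) (by decide) h41,
      key_s9 _ w 2 4 6 2 3 4 6 3 3 (by decide) (by decide) h42,
      key_s9 _ w 2 4 7 7 3 4 7 7 1 (by decide) (by decide) h43,
      key_s9 _ w 2 5 6 6 3 5 6 6 1 (by decide) (by decide) h44,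
      key_s9 _ w 2 5 7 2 3 5 7 3 3 (by decide) (by decide) h45,
      key_s9 _ w 2 6 7 2 3 6 7 3 3 (by decide) (by decide) h46,
      key_s9 _ w 4 5 6 6 4 5 6 6 1 (by decide) (by decide) h53,
      key_s9 _ w 4 5 7 7 4 5 7 7 1 (by decide) (by decide) h54,
      key_s9 _ w 4 6 7 7 4 6 7 7 1 (by decide) (by decide) h55,
      key_s9 _ w 5 6 7 6 5 6 7 6 1 (by decide) (by decide) h56⟩

lemma stab_g3 : ∀ w ∈ D224, (g3 * w) ∈ D224 := by
  intro w hw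
  obtain ⟨h1, h2, h3, h4, h5, h6, h7, h8, h9, h10, h11, h12, h13, h14, h15, h16, h17, h18, h19, h20, h21, h22, h23, h24, h25, h26, h27, h28, h29, h30, h31, h32, h33, h34, h35, h36, h37, h38, h39, h40, h41, h42, h43, h44, h45, h46, h47, h48, h49, h50, h51, h52, h53, h54, h55, h56⟩ := hw
  exact ⟨key_s9 _ w 0 1 2 1 0 1 2 1 3 (by decide) (by decide) h1,
      key_s9 _ w 0 1 3 0 0 1 3 0 3 (by decide) (by decide) h2,
      key_s9 _ w 0 1 5 5 0 1 4 4 1 (by decide) (by decide) h4,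
      key_s9 _ w 0 1 4 4 0 1 5 5 1 (by decide) (by decide) h3,
      key_s9 _ w 0 1 7 7 0 1 6 6 1 (by decide) (by decide) h6,
      key_s9 _ w 0 1 6 6 0 1 7 7 1 (by decide) (by decide) h5,
      key_s9 _ w 0 2 3 0 0 2 3 0 3 (by decide) (by decide) h7,
      key_s9 _ w 0 2 5 5 0 2 4 4 1 (by decide) (by decide) h9,
      key_s9 _ w 0 2 4 4 0 2 5 5 1 (by decide) (by decide) h8,
      key_s9 _ w 0 2 7 7 0 2 6 6 1 (by decide) (by decide) h11,
      key_s9 _ w 0 2 6 6 0 2 7 7 1 (by decide) (by decide) h10,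
      key_s9 _ w 0 3 5 0 0 3 4 0 3 (by decide) (by decide) h13,
      key_s9 _ w 0 3 4 0 0 3 5 0 3 (by decide) (by decide) h12,
      key_s9 _ w 0 3 7 0 0 3 6 0 3 (by decide) (by decide) h15,
      key_s9 _ w 0 3 6 0 0 3 7 0 3 (by decide) (by decide) h14,
      key_s9 _ w 0 4 5 0 0 4 5 0 3 (by decide) (by decide) h16,
      key_s9 _ w 0 5 7 0 0 4 6 0 3 (by decide) (by decide) h20,
      key_s9 _ w 0 5 6 6 0 4 7 7 1 (by decide) (by decide) h19,
      key_s9 _ w 0 4 7 7 0 5 6 6 1 (by decide) (by decide) h18,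
      key_s9 _ w 0 4 6 0 0 5 7 0 3 (by decide) (by decide) h17,
      key_s9 _ w 0 6 7 0 0 6 7 0 3 (by decide) (by decide) h21,
      key_s9 _ w 1 2 3 1 1 2 3 1 3 (by decide) (by decide) h22,
      key_s9 _ w 1 2 5 1 1 2 4 1 3 (by decide) (by decide) h24,
      key_s9 _ w 1 2 4 1 1 2 5 1 3 (by decide) (by decide) h23,
      key_s9 _ w 1 2 7 1 1 2 6 1 3 (by decide) (by decide) h26,
      key_s9 _ w 1 2 6 1 1 2 7 1 3 (by decide) (by decide) h25,
      key_s9 _ w 1 3 5 5 1 3 4 4 1 (by decide) (by decide) h28,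
      key_s9 _ w 1 3 4 4 1 3 5 5 1 (by decide) (by decide) h27,
      key_s9 _ w 1 3 7 7 1 3 6 6 1 (by decide) (by decide) h30,
      key_s9 _ w 1 3 6 6 1 3 7 7 1 (by decide) (by decide) h29,
      key_s9 _ w 1 4 5 1 1 4 5 1 3 (by decide) (by decide) h31,
      key_s9 _ w 1 5 7 1 1 4 6 1 3 (by decide) (by decide) h35,
      key_s9 _ w 1 5 6 6 1 4 7 7 1 (by decide) (by decide) h34,
      key_s9 _ w 1 4 7 7 1 5 6 6 1 (by decide) (by decide) h33,
      key_s9 _ w 1 4 6 1 1 5 7 1 3 (by decide) (by decide) h32,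
      key_s9 _ w 1 6 7 1 1 6 7 1 3 (by decide) (by decide) h36,
      key_s9 _ w 2 3 5 5 2 3 4 4 1 (by decide) (by decide) h38,
      key_s9 _ w 2 3 4 4 2 3 5 5 1 (by decide) (by decide) h37,
      key_s9 _ w 2 3 7 7 2 3 6 6 1 (by decide) (by decide) h40,
      key_s9 _ w 2 3 6 6 2 3 7 7 1 (by decide) (by decide) h39,
      key_s9 _ w 2 4 5 2 2 4 5 2 3 (by decide) (by decide) h41,
      key_s9 _ w 2 5 7 2 2 4 6 2 3 (by decide) (by decide) h45,
      key_s9 _ w 2 5 6 6 2 4 7 7 1 (by decide) (by decide) h44,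
      key_s9 _ w 2 4 7 7 2 5 6 6 1 (by decide) (by decide) h43,
      key_s9 _ w 2 4 6 2 2 5 7 2 3 (by decide) (by decide) h42,
      key_s9 _ w 2 6 7 2 2 6 7 2 3 (by decide) (by decide) h46,
      key_s9 _ w 3 4 5 3 3 4 5 3 3 (by decide) (by decide) h47,
      key_s9 _ w 3 5 7 3 3 4 6 3 3 (by decide) (by decide) h51,
      key_s9 _ w 3 5 6 6 3 4 7 7 1 (by decide) (by decide) h50,
      key_s9 _ w 3 4 7 7 3 5 6 6 1 (by decide) (by decide) h49,
      key_s9 _ w 3 4 6 3 3 5 7 3 3 (by decide) (by decide) h48,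
      key_s9 _ w 3 6 7 3 3 6 7 3 3 (by decide) (by decide) h52,
      key_s9 _ w 4 5 7 7 4 5 6 6 1 (by decide) (by decide) h54,
      key_s9 _ w 4 5 6 6 4 5 7 7 1 (by decide) (by decide) h53,
      key_s9 _ w 5 6 7 6 4 6 7 7 1 (by decide) (by decide) h56,
      key_s9 _ w 4 6 7 7 5 6 7 6 1 (by decide) (by decide) h55⟩

lemma stab_g4 : ∀ w ∈ D224, (g4 * w) ∈ D224 := by
  intro w hw
  obtain ⟨h1, h2, h3, h4, h5, h6, h7, h8, h9, h10, h11, h12, h13, h14, h15, h16, h17, h18, h19, h20, h21, h22, h23, h24, h25, h26, h27, h28, h29, h30, h31, h32, h33, h34, h35, h36, h37, h38, h39, h40, h41, h42, h43, h44, h45, h46, h47, h48, h49, h50, h51, h52, h53, h54, h55, h56⟩ := hw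
  exact ⟨key_s9 _ w 0 1 3 0 0 1 2 1 3 (by decide) (by decide) h2,
      key_s9 _ w 0 1 2 1 0 1 3 0 3 (by decide) (by decide) h1,
      key_s9 _ w 0 1 5 5 0 1 4 4 1 (by decide) (by decide) h4,
      key_s9 _ w 0 1 4 4 0 1 5 5 1 (by decide) (by decide) h3,
      key_s9 _ w 0 1 7 7 0 1 6 6 1 (by decide) (by decide) h6,
      key_s9 _ w 0 1 6 6 0 1 7 7 1 (by decide) (by decide) h5,
      key_s9 _ w 1 2 3 1 0 2 3 0 3 (by decide) (by decide) h22,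
      key_s9 _ w 1 3 5 5 0 2 4 4 1 (by decide) (by decide) h28,
      key_s9 _ w 1 3 4 4 0 2 5 5 1 (by decide) (by decide) h27,
      key_s9 _ w 1 3 7 7 0 2 6 6 1 (by decide) (by decide) h30,
      key_s9 _ w 1 3 6 6 0 2 7 7 1 (by decide) (by decide) h29,
      key_s9 _ w 1 2 5 1 0 3 4 0 3 (by decide) (by decide) h24,
      key_s9 _ w 1 2 4 1 0 3 5 0 3 (by decide) (by decide) h23,
      key_s9 _ w 1 2 7 1 0 3 6 0 3 (by decide) (by decide) h26,
      key_s9 _ w 1 2 6 1 0 3 7 0 3 (by decide) (by decide) h25,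
      key_s9 _ w 1 4 5 1 0 4 5 0 3 (by decide) (by decide) h31,
      key_s9 _ w 1 5 7 1 0 4 6 0 3 (by decide) (by decide) h35,
      key_s9 _ w 1 5 6 6 0 4 7 7 1 (by decide) (by decide) h34,
      key_s9 _ w 1 4 7 7 0 5 6 6 1 (by decide) (by decide) h33,
      key_s9 _ w 1 4 6 1 0 5 7 0 3 (by decide) (by decide) h32,
      key_s9 _ w 1 6 7 1 0 6 7 0 3 (by decide) (by decide) h36,
      key_s9 _ w 0 2 3 0 1 2 3 1 3 (by decide) (by decide) h7,
      key_s9 _ w 0 3 5 0 1 2 4 1 3 (by decide) (by decide) h13,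
      key_s9 _ w 0 3 4 0 1 2 5 1 3 (by decide) (by decide) h12,
      key_s9 _ w 0 3 7 0 1 2 6 1 3 (by decide) (by decide) h15,
      key_s9 _ w 0 3 6 0 1 2 7 1 3 (by decide) (by decide) h14,
      key_s9 _ w 0 2 5 5 1 3 4 4 1 (by decide) (by decide) h9,
      key_s9 _ w 0 2 4 4 1 3 5 5 1 (by decide) (by decide) h8,
      key_s9 _ w 0 2 7 7 1 3 6 6 1 (by decide) (by decide) h11,
      key_s9 _ w 0 2 6 6 1 3 7 7 1 (by decide) (by decide) h10,
      key_s9 _ w 0 4 5 0 1 4 5 1 3 (by decide) (by decide) h16,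
      key_s9 _ w 0 5 7 0 1 4 6 1 3 (by decide) (by decide) h20,
      key_s9 _ w 0 5 6 6 1 4 7 7 1 (by decide) (by decide) h19,
      key_s9 _ w 0 4 7 7 1 5 6 6 1 (by decide) (by decide) h18,
      key_s9 _ w 0 4 6 0 1 5 7 1 3 (by decide) (by decide) h17,
      key_s9 _ w 0 6 7 0 1 6 7 1 3 (by decide) (by decide) h21,
      key_s9 _ w 2 3 5 5 2 3 4 4 1 (by decide) (by decide) h38,
      key_s9 _ w 2 3 4 4 2 3 5 5 1 (by decide) (by decide) h37,
      key_s9 _ w 2 3 7 7 2 3 6 6 1 (by decide) (by decide) h40,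
      key_s9 _ w 2 3 6 6 2 3 7 7 1 (by decide) (by decide) h39,
      key_s9 _ w 3 4 5 3 2 4 5 2 3 (by decide) (by decide) h47,
      key_s9 _ w 3 5 7 3 2 4 6 2 3 (by decide) (by decide) h51,
      key_s9 _ w 3 5 6 6 2 4 7 7 1 (by decide) (by decide) h50,
      key_s9 _ w 3 4 7 7 2 5 6 6 1 (by decide) (by decide) h49,
      key_s9 _ w 3 4 6 3 2 5 7 2 3 (by decide) (by decide) h48,
      key_s9 _ w 3 6 7 3 2 6 7 2 3 (by decide) (by decide) h52,
      key_s9 _ w 2 4 5 2 3 4 5 3 3 (by decide) (by decide) h41,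
      key_s9 _ w 2 5 7 2 3 4 6 3 3 (by decide) (by decide) h45,
      key_s9 _ w 2 5 6 6 3 4 7 7 1 (by decide) (by decide) h44,
      key_s9 _ w 2 4 7 7 3 5 6 6 1 (by decide) (by decide) h43,
      key_s9 _ w 2 4 6 2 3 5 7 3 3 (by decide) (by decide) h42,
      key_s9 _ w 2 6 7 2 3 6 7 3 3 (by decide) (by decide) h46,
      key_s9 _ w 4 5 7 7 4 5 6 6 1 (by decide) (by decide) h54,
      key_s9 _ w 4 5 6 6 4 5 7 7 1 (by decide) (by decide) h53,
      key_s9 _ w 5 6 7 6 4 6 7 7 1 (by decide) (by decide) h56,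
      key_s9 _ w 4 6 7 7 5 6 7 6 1 (by decide) (by decide) h55⟩

lemma closed (g : Equiv.Perm (Fin 8)) (h2 : g * g = 1)
    (H : ∀ w ∈ D224, g * w ∈ D224) : relabel g D224 = D224 := by
  ext w
  constructor
  · rintro ⟨v, hv, rfl⟩; exact H v hv
  · intro hw
    exact ⟨g * w, H w hw, by simp [← mul_assoc, h2]⟩

/-- `D224` is invariant under the Klein four-group
`G = {id, (12)(34), (56)(78), (12)(34)(56)(78)}` (acting by relabelling of the
alternatives; here alternative `k` is modelled as `k - 1 : Fin 8`). -/
theorem stmt9 :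
    ∀ g ∈ ({1, Equiv.swap 0 1 * Equiv.swap 2 3, Equiv.swap 4 5 * Equiv.swap 6 7,
        Equiv.swap 0 1 * Equiv.swap 2 3 * (Equiv.swap 4 5 * Equiv.swap 6 7)} :
        Set (Equiv.Perm (Fin 8))),
      relabel g D224 = D224 := by
  intro g hg
  rcases hg with rfl | rfl | rfl | rfl
  · ext w
    constructor
    · rintro ⟨v, hv, rfl⟩; simpa using hv
    · intro hw; exact ⟨w, hw, one_mul w⟩
  · exact closed g2 (by decide) stab_g2
  · exact closed g3 (by decide) stab_g3
  · exact closed g4 (by decide) stab_g4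
end
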